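/- (Symmetrizability) Under the non-resonance condition (u − u₁)² ≠ c₁² and (u − u₂)² ≠ c₂², there exists a symmetric positive definite matrix P ∈ Matrix (Fin 7) (Fin 7) ℝ such that P·M is symmetric, where M is the quasilinear coefficient matrix of the two-fluid model. -/

import Mathlib

open Matrix

set_option maxHeartbeats 1000000

section aux
variable {α : Type*} (a b c d e f g : α)
lemma cv0 : ![a,b,c,d,e,f,g] 0 = a := rfl
lemma cv1 : ![a,b,c,d,e,f,g] 1 = b := rfl
lemma cv2 : ![a,b,c,d,e,f,g] 2 = c := rfl
lemma cv3 : ![a,b,c,d,e,f,g] 3 = d := rfl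
lemma cv4 : ![a,b,c,d,e,f,g] 4 = e := rfl
lemma cv5 : ![a,b,c,d,e,f,g] 5 = f := rfl
lemma cv6 : ![a,b,c,d,e,f,g] 6 = g := rfl
lemma cw0 (h : (0:ℕ) < 7) : ![a,b,c,d,e,f,g] ⟨0,h⟩ = a := rfl
lemma cw1 (h : (1:ℕ) < 7) : ![a,b,c,d,e,f,g] ⟨1,h⟩ = b := rfl
lemma cw2 (h : (2:ℕ) < 7) : ![a,b,c,d,e,f,g] ⟨2,h⟩ = c := rfl
lemma cw3 (h : (3:ℕ) < 7) : ![a,b,c,d,e,f,g] ⟨3,h⟩ = d := rfl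
lemma cw4 (h : (4:ℕ) < 7) : ![a,b,c,d,e,f,g] ⟨4,h⟩ = e := rfl
lemma cw5 (h : (5:ℕ) < 7) : ![a,b,c,d,e,f,g] ⟨5,h⟩ = f := rfl
lemma cw6 (h : (6:ℕ) < 7) : ![a,b,c,d,e,f,g] ⟨6,h⟩ = g := rfl
end aux

private lemma sq_pos' {a : ℝ} (h : a ≠ 0) : 0 < a ^ 2 :=
  (pow_pos (abs_pos.mpr h) 2).trans_eq (sq_abs _)

/-- The block-diagonal-plus-coupling symmetrizer is positive definite. -/
lemma helper (d1 d4 q1 q2 q4 q5 : ℝ) (hd1 : 0 < d1) (hd4 : 0 < d4) :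
    (!![1 + q1^2/d1 + q2^2 + q4^2/d4 + q5^2, q1, q2, 0, q4, q5, 0;
        q1, d1, 0, 0, 0, 0, 0;
        q2, 0, 1, 0, 0, 0, 0;
        0, 0, 0, 1, 0, 0, 0;
        q4, 0, 0, 0, d4, 0, 0;
        q5, 0, 0, 0, 0, 1, 0;
        0, 0, 0, 0, 0, 0, 1] : Matrix (Fin 7) (Fin 7) ℝ).PosDef := by
  rw [Matrix.posDef_iff_dotProduct_mulVec]
  constructor
  · ext i j
    fin_cases i <;> fin_cases j <;> rfl
  · intro x hx
    have expand : star x ⬝ᵥ (!![1 + q1^2/d1 + q2^2 + q4^2/d4 + q5^2, q1, q2, 0, q4, q5, 0;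
        q1, d1, 0, 0, 0, 0, 0;
        q2, 0, 1, 0, 0, 0, 0;
        0, 0, 0, 1, 0, 0, 0;
        q4, 0, 0, 0, d4, 0, 0;
        q5, 0, 0, 0, 0, 1, 0;
        0, 0, 0, 0, 0, 0, 1] : Matrix (Fin 7) (Fin 7) ℝ) *ᵥ x
        = (x 0)^2 + (d1 * x 1 + q1 * x 0)^2/d1 + (x 2 + q2 * x 0)^2 + (x 3)^2
          + (d4 * x 4 + q4 * x 0)^2/d4 + (x 5 + q5 * x 0)^2 + (x 6)^2 := by
      simp only [dotProduct, Matrix.mulVec, Fin.sum_univ_seven, Matrix.of_apply,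
        cv0, cv1, cv2, cv3, cv4, cv5, cv6, star_trivial, Pi.star_apply]
      field_simp
      ring
    rw [expand]
    have h1 : 0 ≤ (d1 * x 1 + q1 * x 0)^2/d1 := div_nonneg (sq_nonneg _) hd1.le
    have h4 : 0 ≤ (d4 * x 4 + q4 * x 0)^2/d4 := div_nonneg (sq_nonneg _) hd4.le
    by_cases h0 : x 0 = 0
    · rw [h0]
      have e1 : (d1 * x 1 + q1 * 0)^2/d1 = d1 * (x 1)^2 := by field_simp; ring
      have e4 : (d4 * x 4 + q4 * 0)^2/d4 = d4 * (x 4)^2 := by field_simp; ring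
      rw [e1, e4]
      obtain ⟨i, hi⟩ := Function.ne_iff.mp hx
      fin_cases i
      · exact absurd h0 hi
      · have h : x 1 ≠ 0 := hi
        nlinarith [mul_pos hd1 (sq_pos' h), mul_nonneg hd4.le (sq_nonneg (x 4)),
          sq_nonneg (x 2 + q2 * 0), sq_nonneg (x 3), sq_nonneg (x 5 + q5 * 0), sq_nonneg (x 6)]
      · have h : x 2 ≠ 0 := hi
        nlinarith [sq_pos' h, mul_nonneg hd4.le (sq_nonneg (x 4)),
          mul_nonneg hd1.le (sq_nonneg (x 1)), sq_nonneg (x 3), sq_nonneg (x 5 + q5 * 0), sq_nonneg (x 6)]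
      · have h : x 3 ≠ 0 := hi
        nlinarith [sq_pos' h, mul_nonneg hd4.le (sq_nonneg (x 4)),
          mul_nonneg hd1.le (sq_nonneg (x 1)), sq_nonneg (x 2 + q2 * 0), sq_nonneg (x 5 + q5 * 0), sq_nonneg (x 6)]
      · have h : x 4 ≠ 0 := hi
        nlinarith [mul_pos hd4 (sq_pos' h), mul_nonneg hd1.le (sq_nonneg (x 1)),
          sq_nonneg (x 2 + q2 * 0), sq_nonneg (x 3), sq_nonneg (x 5 + q5 * 0), sq_nonneg (x 6)]
      · have h : x 5 ≠ 0 := hi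
        nlinarith [sq_pos' h, mul_nonneg hd4.le (sq_nonneg (x 4)),
          mul_nonneg hd1.le (sq_nonneg (x 1)), sq_nonneg (x 2 + q2 * 0), sq_nonneg (x 3), sq_nonneg (x 6)]
      · have h : x 6 ≠ 0 := hi
        nlinarith [sq_pos' h, mul_nonneg hd4.le (sq_nonneg (x 4)),
          mul_nonneg hd1.le (sq_nonneg (x 1)), sq_nonneg (x 2 + q2 * 0), sq_nonneg (x 3), sq_nonneg (x 5 + q5 * 0)]
    · nlinarith [sq_pos' h0, h1, h4, sq_nonneg (x 2 + q2 * x 0), sq_nonneg (x 3),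
        sq_nonneg (x 5 + q5 * x 0), sq_nonneg (x 6)]

/-- The product of the symmetrizer with the coefficient matrix is symmetric,
given the entrywise compatibility equations. -/
lemma helper2 (β q1 q2 q4 q5 d1 d4 u u1 u2 w1 x1 w2 x2 a1 b1 a2 b2 : ℝ)
    (e1 : q1 * u + d1 * w1 = q1 * u1 + q2 * b1)
    (e2 : q2 * u + x1 = q1 * a1 + q2 * u1)
    (e3 : d1 * a1 = b1)
    (e4 : q4 * u + d4 * w2 = q4 * u2 + q5 * b2)
    (e5 : q5 * u + x2 = q4 * a2 + q5 * u2)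
    (e6 : d4 * a2 = b2) :
    ((!![β, q1, q2, 0, q4, q5, 0;
         q1, d1, 0, 0, 0, 0, 0;
         q2, 0, 1, 0, 0, 0, 0;
         0, 0, 0, 1, 0, 0, 0;
         q4, 0, 0, 0, d4, 0, 0;
         q5, 0, 0, 0, 0, 1, 0;
         0, 0, 0, 0, 0, 0, 1] : Matrix (Fin 7) (Fin 7) ℝ) *
      !![u, 0, 0, 0, 0, 0, 0;
         w1, u1, a1, 0, 0, 0, 0;
         x1, b1, u1, 0, 0, 0, 0;
         0, 0, 0, u1, 0, 0, 0;
         w2, 0, 0, 0, u2, a2, 0;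
         x2, 0, 0, 0, b2, u2, 0;
         0, 0, 0, 0, 0, 0, u2]).IsSymm := by
  show _ = _
  ext i j
  rw [Matrix.transpose_apply]
  fin_cases i <;> fin_cases j <;>
    simp only [Matrix.mul_apply, Fin.sum_univ_seven, Matrix.of_apply,
      cv0, cv1, cv2, cv3, cv4, cv5, cv6, cw0, cw1, cw2, cw3, cw4, cw5, cw6,
      zero_mul, mul_zero, add_zero, zero_add, one_mul, mul_one] <;>
    first
      | rfl
      | linear_combination e1
      | linear_combination -e1
      | linear_combination e2
      | linear_combination -e2
      | linear_combination e3
      | linear_combination -e3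
      | linear_combination e4
      | linear_combination -e4
      | linear_combination e5
      | linear_combination -e5
      | linear_combination e6
      | linear_combination -e6

/-- (Symmetrizability) Under the non-resonance condition, there exists a symmetric
positive definite matrix `P` such that `P * M` is symmetric, where `M` is the
quasilinear coefficient matrix of the two-fluid model. -/
theorem two_fluid_model_symmetrizable
    (α₁ ρ₁ ρ₂ c₁ c₂ u₁ u₂ p₁ p₂ : ℝ)
    (hα₁ : 0 < α₁) (hα₁' : α₁ < 1)
    (hρ₁ : 0 < ρ₁) (hρ₂ : 0 < ρ₂) (hc₁ : 0 < c₁) (hc₂ : 0 < c₂)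
    (α₂ m₁ m₂ ρ Y₁ Y₂ u : ℝ)
    (hα₂ : α₂ = 1 - α₁) (hm₁ : m₁ = α₁ * ρ₁) (hm₂ : m₂ = α₂ * ρ₂)
    (hρ : ρ = m₁ + m₂) (hY₁ : Y₁ = m₁ / ρ) (hY₂ : Y₂ = m₂ / ρ)
    (hu : u = Y₁ * u₁ + Y₂ * u₂)
    (hres₁ : (u - u₁) ^ 2 ≠ c₁ ^ 2) (hres₂ : (u - u₂) ^ 2 ≠ c₂ ^ 2)
    (M : Matrix (Fin 7) (Fin 7) ℝ)
    (hM : M = !![u, 0, 0, 0, 0, 0, 0;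
                 (p₁ - p₂) / ρ, u₁, 1 / ρ₁, 0, 0, 0, 0;
                 -(ρ₁ * c₁ ^ 2 / α₁) * (u - u₁), ρ₁ * c₁ ^ 2, u₁, 0, 0, 0, 0;
                 0, 0, 0, u₁, 0, 0, 0;
                 (p₁ - p₂) / ρ, 0, 0, 0, u₂, 1 / ρ₂, 0;
                 (ρ₂ * c₂ ^ 2 / α₂) * (u - u₂), 0, 0, 0, ρ₂ * c₂ ^ 2, u₂, 0;
                 0, 0, 0, 0, 0, 0, u₂]) :
    ∃ P : Matrix (Fin 7) (Fin 7) ℝ, P.PosDef ∧ (P * M).IsSymm := by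
  have hα₂pos : 0 < α₂ := by rw [hα₂]; linarith
  have hρpos : 0 < ρ := by
    rw [hρ, hm₁, hm₂, hα₂]
    nlinarith [mul_pos hα₁ hρ₁, mul_pos (by linarith : (0:ℝ) < 1 - α₁) hρ₂]
  have hA₁ : (u₁ - u) ^ 2 - c₁ ^ 2 ≠ 0 := by
    intro h; exact hres₁ (by nlinarith)
  have hA₂ : (u₂ - u) ^ 2 - c₂ ^ 2 ≠ 0 := by
    intro h; exact hres₂ (by nlinarith)
  obtain ⟨q1, hq1⟩ : ∃ x : ℝ, x = ((u₁-u) * (ρ₁^2*c₁^2*((p₁-p₂)/ρ)) - ρ₁*c₁^2 * (-(ρ₁*c₁^2/α₁)*(u-u₁)))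
      / ((u₁-u)^2 - c₁^2) := ⟨_, rfl⟩
  obtain ⟨q2, hq2⟩ : ∃ x : ℝ, x = ((u₁-u) * (-(ρ₁*c₁^2/α₁)*(u-u₁)) - (ρ₁^2*c₁^2*((p₁-p₂)/ρ))/ρ₁)
      / ((u₁-u)^2 - c₁^2) := ⟨_, rfl⟩
  obtain ⟨q4, hq4⟩ : ∃ x : ℝ, x = ((u₂-u) * (ρ₂^2*c₂^2*((p₁-p₂)/ρ)) - ρ₂*c₂^2 * ((ρ₂*c₂^2/α₂)*(u-u₂)))
      / ((u₂-u)^2 - c₂^2) := ⟨_, rfl⟩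
  obtain ⟨q5, hq5⟩ : ∃ x : ℝ, x = ((u₂-u) * ((ρ₂*c₂^2/α₂)*(u-u₂)) - (ρ₂^2*c₂^2*((p₁-p₂)/ρ))/ρ₂)
      / ((u₂-u)^2 - c₂^2) := ⟨_, rfl⟩
  have hs1 : (u₁-u) * q1 + ρ₁*c₁^2 * q2 = ρ₁^2*c₁^2*((p₁-p₂)/ρ) := by
    rw [hq1, hq2]; field_simp [hA₁, hρ₁.ne', hα₁.ne', hρpos.ne']; ring
  have hs2 : q1/ρ₁ + (u₁-u) * q2 = -(ρ₁*c₁^2/α₁)*(u-u₁) := by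
    rw [hq1, hq2]; field_simp [hA₁, hρ₁.ne', hα₁.ne', hρpos.ne']; ring
  have hs4 : (u₂-u) * q4 + ρ₂*c₂^2 * q5 = ρ₂^2*c₂^2*((p₁-p₂)/ρ) := by
    rw [hq4, hq5]; field_simp [hA₂, hρ₂.ne', hα₂pos.ne', hρpos.ne']; ring
  have hs5 : q4/ρ₂ + (u₂-u) * q5 = (ρ₂*c₂^2/α₂)*(u-u₂) := by
    rw [hq4, hq5]; field_simp [hA₂, hρ₂.ne', hα₂pos.ne', hρpos.ne']; ring
  have e1 : q1 * u + (ρ₁^2*c₁^2) * ((p₁-p₂)/ρ) = q1 * u₁ + q2 * (ρ₁*c₁^2) := by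
    linear_combination -hs1
  have e2 : q2 * u + (-(ρ₁ * c₁ ^ 2 / α₁) * (u - u₁)) = q1 * (1/ρ₁) + q2 * u₁ := by
    linear_combination -hs2
  have e3 : (ρ₁^2*c₁^2) * (1/ρ₁) = ρ₁ * c₁ ^ 2 := by
    field_simp
  have e4 : q4 * u + (ρ₂^2*c₂^2) * ((p₁-p₂)/ρ) = q4 * u₂ + q5 * (ρ₂*c₂^2) := by
    linear_combination -hs4
  have e5 : q5 * u + ((ρ₂ * c₂ ^ 2 / α₂) * (u - u₂)) = q4 * (1/ρ₂) + q5 * u₂ := by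
    linear_combination -hs5
  have e6 : (ρ₂^2*c₂^2) * (1/ρ₂) = ρ₂ * c₂ ^ 2 := by
    field_simp
  refine ⟨!![1 + q1^2/(ρ₁^2*c₁^2) + q2^2 + q4^2/(ρ₂^2*c₂^2) + q5^2, q1, q2, 0, q4, q5, 0;
        q1, ρ₁^2*c₁^2, 0, 0, 0, 0, 0;
        q2, 0, 1, 0, 0, 0, 0;
        0, 0, 0, 1, 0, 0, 0;
        q4, 0, 0, 0, ρ₂^2*c₂^2, 0, 0;
        q5, 0, 0, 0, 0, 1, 0;
        0, 0, 0, 0, 0, 0, 1],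
    helper _ _ _ _ _ _ (by positivity) (by positivity), ?_⟩
  rw [hM]
  exact helper2 _ q1 q2 q4 q5 (ρ₁^2*c₁^2) (ρ₂^2*c₂^2) u u₁ u₂
    ((p₁-p₂)/ρ) (-(ρ₁ * c₁ ^ 2 / α₁) * (u - u₁)) ((p₁-p₂)/ρ) ((ρ₂ * c₂ ^ 2 / α₂) * (u - u₂))
    (1/ρ₁) (ρ₁ * c₁ ^ 2) (1/ρ₂) (ρ₂ * c₂ ^ 2) e1 e2 e3 e4 e5 e6
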